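/- Let k be a field with char k ≠ 2, λ ∈ k with λ ≠ 0, 1, and S = k[X₁,X₂,X₃,X₄]/(X₃² − X₂² − X₁², X₄² − X₂² − λX₁²), graded by 𝕃 via deg xᵢ = xᵢ. Fix i ≠ j in {1,2,3,4} and an integer l ≥ 1. Then the homogeneous component S_{l·c} is the internal direct sum of the one-dimensional k-span of x_j^{2l} and the subspace xᵢ·S_{l·c − xᵢ} (which has k-dimension l); in particular, x_j^{2l} does not lie in xᵢ·S_{l·c − xᵢ}, i.e., x_j^{2l} cannot be factored through multiplication by xᵢ. -/

import Mathlib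

/-- The subgroup of relations `2e₁ = 2e₂ = 2e₃ = 2e₄` in `ℤ⁴`. -/
def Lrel : AddSubgroup (Fin 4 → ℤ) :=
  AddSubgroup.closure
    { (2 : ℤ) • Pi.single (0 : Fin 4) (1 : ℤ) - (2 : ℤ) • Pi.single 1 1,
      (2 : ℤ) • Pi.single (0 : Fin 4) (1 : ℤ) - (2 : ℤ) • Pi.single 2 1,
      (2 : ℤ) • Pi.single (0 : Fin 4) (1 : ℤ) - (2 : ℤ) • Pi.single 3 1 }

/-- The group `𝕃` of type `(2,2,2,2)`. -/
abbrev Lgrp : Type := (Fin 4 → ℤ) ⧸ Lrel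

/-- The generators `x₁, x₂, x₃, x₄` of `𝕃`. -/
def xL (i : Fin 4) : Lgrp := QuotientAddGroup.mk (Pi.single i 1)

/-- The canonical element `c = 2x₁`. -/
def cL : Lgrp := (2 : ℤ) • xL 0

open MvPolynomial

/-- The defining ideal `(X₃² − X₂² − X₁², X₄² − X₂² − λX₁²)`. -/
noncomputable def relIdeal (k : Type*) [Field k] (lam : k) : Ideal (MvPolynomial (Fin 4) k) :=
  Ideal.span
    {(X 2 : MvPolynomial (Fin 4) k) ^ 2 - X 1 ^ 2 - X 0 ^ 2,
     (X 3 : MvPolynomial (Fin 4) k) ^ 2 - X 1 ^ 2 - C lam * X 0 ^ 2}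

/-- The homogeneous coordinate algebra `S` of the weighted projective line of type
`(2,2,2,2;λ)`. -/
abbrev Sring (k : Type*) [Field k] (lam : k) : Type _ :=
  MvPolynomial (Fin 4) k ⧸ relIdeal k lam

/-- The `𝕃`-degree of a monomial exponent `a ∈ ℕ⁴`, namely `Σᵢ aᵢ·xᵢ`. -/
noncomputable def mdeg (a : Fin 4 →₀ ℕ) : Lgrp := ∑ i, (a i : ℤ) • xL i

/-- The homogeneous component `S_x ⊆ S` of degree `x ∈ 𝕃`: the `k`-span of the images in `S`
of the monomials of `𝕃`-degree `x`. -/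
noncomputable def Sx (k : Type*) [Field k] (lam : k) (x : Lgrp) : Submodule k (Sring k lam) :=
  Submodule.span k (Ideal.Quotient.mk (relIdeal k lam) ''
    { m | ∃ a : Fin 4 →₀ ℕ, mdeg a = x ∧ m = monomial a (1 : k) })

/-- The image `xᵢ ∈ S` of the variable `Xᵢ`. -/
noncomputable def xg (k : Type*) [Field k] (lam : k) (i : Fin 4) : Sring k lam :=
  Ideal.Quotient.mk (relIdeal k lam) (X i)


section aux

variable (k : Type*) [Field k] (lam : k)






-- relator membership
lemma rel_mem (t : Fin 4) :
    ((2 : ℤ) • Pi.single (0 : Fin 4) (1 : ℤ) - (2 : ℤ) • Pi.single t 1) ∈ Lrel := by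
  fin_cases t
  · simp
  all_goals exact AddSubgroup.subset_closure (by simp)

lemma mk_eq_mk {a b : Fin 4 → ℤ} (h : -a + b ∈ Lrel) :
    (QuotientAddGroup.mk a : Lgrp) = QuotientAddGroup.mk b :=
  QuotientAddGroup.eq.mpr h

lemma mdeg_eq_mk (a : Fin 4 →₀ ℕ) :
    mdeg a = QuotientAddGroup.mk (fun t => (a t : ℤ)) := by
  rw [mdeg]
  have h1 : ∀ t : Fin 4, (a t : ℤ) • xL t
      = QuotientAddGroup.mk' Lrel ((a t : ℤ) • Pi.single t 1) := by
    intro t; rw [map_zsmul]; rfl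
  simp_rw [h1]
  rw [← map_sum]
  have h2 : ∑ t : Fin 4, (a t : ℤ) • Pi.single t (1:ℤ) = fun t => (a t : ℤ) := by
    funext t
    simp [Finset.sum_apply, Pi.single_apply]
  rw [h2]
  rfl

def fpar : (Fin 4 → ℤ) →+ ℤ × (ZMod 2 × ZMod 2 × ZMod 2) where
  toFun a := (a 0 + a 1 + a 2 + a 3, ((a 1 : ZMod 2), (a 2 : ZMod 2), (a 3 : ZMod 2)))
  map_zero' := by simp
  map_add' a b := by
    simp only [Pi.add_apply, Prod.mk_add_mk, Prod.mk.injEq]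
    refine ⟨by ring, ?_, ?_, ?_⟩ <;> push_cast <;> ring

lemma Lrel_le_ker : Lrel ≤ fpar.ker := by
  rw [Lrel, AddSubgroup.closure_le]
  intro x hx
  simp only [Set.mem_insert_iff, Set.mem_singleton_iff] at hx
  rcases hx with h | h | h <;> subst h <;>
    simp [AddMonoidHom.mem_ker, fpar, Pi.single_apply, Prod.ext_iff] <;> decide

noncomputable def fL : Lgrp →+ ℤ × (ZMod 2 × ZMod 2 × ZMod 2) :=
  QuotientAddGroup.lift Lrel fpar Lrel_le_ker

lemma fL_mk (a : Fin 4 → ℤ) : fL (QuotientAddGroup.mk a) = fpar a := rfl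

lemma fL_lc (l : ℕ) : fL (l • cL) = ((2 * l : ℤ), ((0 : ZMod 2), 0, 0)) := by
  have h : fL cL = ((2 : ℤ), ((0 : ZMod 2), 0, 0)) := by
    rw [cL, map_zsmul, xL, fL_mk]
    simp [fpar, Pi.single_apply, Prod.ext_iff]
  rw [map_nsmul, h]
  simp [Prod.ext_iff, smul_eq_mul]
  ring

lemma finmk0 : (⟨0, by omega⟩ : Fin 4) = 0 := rfl
lemma finmk1 : (⟨1, by omega⟩ : Fin 4) = 1 := rfl
lemma finmk2 : (⟨2, by omega⟩ : Fin 4) = 2 := rfl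
lemma finmk3 : (⟨3, by omega⟩ : Fin 4) = 3 := rfl

def rl (t : Fin 4) : Fin 4 → ℤ :=
  (2 : ℤ) • (Pi.single 0 1 : Fin 4 → ℤ) - (2 : ℤ) • (Pi.single t 1 : Fin 4 → ℤ)

lemma rl_mem (t : Fin 4) : rl t ∈ Lrel := rel_mem t

lemma lc_eq_mk (l : ℕ) :
    l • cL = QuotientAddGroup.mk ((2 * l : ℤ) • Pi.single (0 : Fin 4) (1 : ℤ)) := by
  rw [cL, xL]
  have h1 : (2:ℤ) • (QuotientAddGroup.mk (Pi.single (0 : Fin 4) (1:ℤ)) : Lgrp)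
      = QuotientAddGroup.mk' Lrel ((2:ℤ) • (Pi.single (0 : Fin 4) (1:ℤ) : Fin 4 → ℤ)) := by
    rw [map_zsmul]; rfl
  rw [h1, ← map_nsmul]
  have h2 : l • ((2:ℤ) • (Pi.single (0 : Fin 4) (1:ℤ) : Fin 4 → ℤ)) = (2 * l : ℤ) • (Pi.single (0 : Fin 4) (1:ℤ) : Fin 4 → ℤ) := by
    rw [← natCast_zsmul, smul_smul]; ring_nf
  rw [h2]; rfl

lemma mdeg_eq_lc_iff (a : Fin 4 →₀ ℕ) (l : ℕ) :
    mdeg a = l • cL ↔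
      ∃ b : Fin 4 → ℕ, (∀ t, a t = 2 * b t) ∧ b 0 + b 1 + b 2 + b 3 = l := by
  constructor
  · intro h
    have h2 := congrArg fL h
    rw [mdeg_eq_mk, fL_mk, fL_lc] at h2
    rw [Prod.ext_iff, Prod.ext_iff, Prod.ext_iff] at h2
    obtain ⟨hsum, h1, h2, h3⟩ := h2
    simp only [fpar, AddMonoidHom.coe_mk, ZeroHom.coe_mk, Int.cast_natCast] at hsum h1 h2 h3
    have d1 : 2 ∣ a 1 := (ZMod.natCast_eq_zero_iff _ 2).1 h1
    have d2 : 2 ∣ a 2 := (ZMod.natCast_eq_zero_iff _ 2).1 h2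
    have d3 : 2 ∣ a 3 := (ZMod.natCast_eq_zero_iff _ 2).1 h3
    have hs : a 0 + a 1 + a 2 + a 3 = 2 * l := by exact_mod_cast hsum
    have d0 : 2 ∣ a 0 := by omega
    refine ⟨fun t => a t / 2, fun t => ?_, ?_⟩
    · fin_cases t <;>
        · simp only [Fin.isValue, finmk0, finmk1, finmk2, finmk3]
          omega
    · dsimp only; omega
  · rintro ⟨b, hb, hs⟩
    rw [mdeg_eq_mk, lc_eq_mk]
    apply mk_eq_mk
    have key : (-fun t => ((a t : ℤ))) + (2 * l : ℤ) • Pi.single (0 : Fin 4) (1 : ℤ)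
        = (b 1 : ℤ) • rl 1 + (b 2 : ℤ) • rl 2 + (b 3 : ℤ) • rl 3 := by
      have e0 := hb 0; have e1 := hb 1; have e2 := hb 2; have e3 := hb 3
      funext t
      fin_cases t <;>
        · simp only [Fin.isValue, finmk0, finmk1, finmk2, finmk3]
          simp [rl, Pi.single_apply]
          try (push_cast [e0, e1, e2, e3]; omega)
    rw [key]
    exact add_mem (add_mem (AddSubgroup.zsmul_mem _ (rl_mem 1) _)
      (AddSubgroup.zsmul_mem _ (rl_mem 2) _)) (AddSubgroup.zsmul_mem _ (rl_mem 3) _)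

lemma mdeg_add (a b : Fin 4 →₀ ℕ) : mdeg (a + b) = mdeg a + mdeg b := by
  rw [mdeg_eq_mk, mdeg_eq_mk, mdeg_eq_mk]
  have : (fun t => (((a + b) t : ℕ) : ℤ)) = (fun t => ((a t : ℕ) : ℤ)) + fun t => ((b t : ℕ) : ℤ) := by
    funext t; simp
  rw [this]
  rfl

lemma mdeg_single (t : Fin 4) : mdeg (Finsupp.single t 1) = xL t := by
  rw [mdeg_eq_mk, xL]
  congr 1
  funext s
  simp [Finsupp.single_apply, Pi.single_apply, eq_comm]



noncomputable def pia : MvPolynomial (Fin 4) k →ₐ[k] Sring k lam :=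
  Ideal.Quotient.mkₐ k (relIdeal k lam)

lemma pia_apply (f : MvPolynomial (Fin 4) k) :
    pia k lam f = Ideal.Quotient.mk (relIdeal k lam) f := rfl

noncomputable def monE (p q : ℕ) : MvPolynomial (Fin 4) k := X 0 ^ (2*p) * X 1 ^ (2*q)

noncomputable def Acoef : Fin 4 → k := ![1, 0, 1, lam]
noncomputable def Bcoef : Fin 4 → k := ![0, 1, 1, 1]

noncomputable def wpoly (t : Fin 4) : MvPolynomial (Fin 4) k :=
  C (Acoef k lam t) * X 0 ^ 2 + C (Bcoef k t) * X 1 ^ 2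

lemma pia_sq (t : Fin 4) : pia k lam (X t ^ 2) = pia k lam (wpoly k lam t) := by
  rw [pia_apply, pia_apply, Ideal.Quotient.eq]
  fin_cases t
  · show (X 0 : MvPolynomial (Fin 4) k) ^ 2 - wpoly k lam 0 ∈ relIdeal k lam
    have : (X 0 : MvPolynomial (Fin 4) k) ^ 2 - wpoly k lam 0 = 0 := by
      simp [wpoly, Acoef, Bcoef]
    rw [this]; exact zero_mem _
  · show (X 1 : MvPolynomial (Fin 4) k) ^ 2 - wpoly k lam 1 ∈ relIdeal k lam
    have : (X 1 : MvPolynomial (Fin 4) k) ^ 2 - wpoly k lam 1 = 0 := by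
      simp [wpoly, Acoef, Bcoef]
    rw [this]; exact zero_mem _
  · show (X 2 : MvPolynomial (Fin 4) k) ^ 2 - wpoly k lam 2 ∈ relIdeal k lam
    have : (X 2 : MvPolynomial (Fin 4) k) ^ 2 - wpoly k lam 2
        = (X 2 : MvPolynomial (Fin 4) k) ^ 2 - X 1 ^ 2 - X 0 ^ 2 := by
      simp [wpoly, Acoef, Bcoef]; ring
    rw [this]
    exact Ideal.subset_span (by simp [relIdeal])
  · show (X 3 : MvPolynomial (Fin 4) k) ^ 2 - wpoly k lam 3 ∈ relIdeal k lam
    have : (X 3 : MvPolynomial (Fin 4) k) ^ 2 - wpoly k lam 3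
        = (X 3 : MvPolynomial (Fin 4) k) ^ 2 - X 1 ^ 2 - C lam * X 0 ^ 2 := by
      simp [wpoly, Acoef, Bcoef]; ring
    rw [this]
    exact Ideal.subset_span (by simp [relIdeal])

noncomputable def Efam (n : ℕ) : Fin (n+1) → Sring k lam :=
  fun p => pia k lam (monE k p (n - p))

noncomputable def Vspan (n : ℕ) : Submodule k (Sring k lam) :=
  Submodule.span k (Set.range (Efam k lam n))

lemma wE (t : Fin 4) (n : ℕ) (p : Fin (n+1)) :
    pia k lam (wpoly k lam t) * Efam k lam n p
      = Acoef k lam t • Efam k lam (n+1) p.succ + Bcoef k t • Efam k lam (n+1) p.castSucc := by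
  have hple : (p : ℕ) ≤ n := Nat.lt_succ_iff.1 p.isLt
  have h1 : ((n+1) - ((p.succ : Fin (n+2)) : ℕ)) = n - p := by
    simp [Fin.val_succ]
  have h2 : ((n+1) - ((p.castSucc : Fin (n+2)) : ℕ)) = (n - p) + 1 := by
    simp [Fin.coe_castSucc]
    omega
  rw [Efam, Efam, Efam, h1, h2, Fin.val_succ, Fin.coe_castSucc]
  rw [← map_mul]
  have key : wpoly k lam t * monE k (p : ℕ) (n - p)
      = Acoef k lam t • monE k ((p : ℕ)+1) (n - p) + Bcoef k t • monE k (p : ℕ) ((n - p)+1) := by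
    rw [wpoly, monE, monE, monE, smul_eq_C_mul, smul_eq_C_mul]
    ring
  rw [key, map_add, map_smul, map_smul]

lemma mul_w_mem {n : ℕ} {x : Sring k lam} (t : Fin 4) (hx : x ∈ Vspan k lam n) :
    pia k lam (wpoly k lam t) * x ∈ Vspan k lam (n+1) := by
  induction hx using Submodule.span_induction with
  | mem y hy =>
    obtain ⟨p, rfl⟩ := hy
    rw [wE]
    exact add_mem
      (Submodule.smul_mem _ _ (Submodule.subset_span ⟨p.succ, rfl⟩))
      (Submodule.smul_mem _ _ (Submodule.subset_span ⟨p.castSucc, rfl⟩))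
  | zero => rw [mul_zero]; exact zero_mem _
  | add y z _ _ hy hz => rw [mul_add]; exact add_mem hy hz
  | smul c y _ hy => rw [mul_smul_comm]; exact Submodule.smul_mem _ _ hy

lemma mul_wpow_mem {n : ℕ} {x : Sring k lam} (t : Fin 4) (m : ℕ) (hx : x ∈ Vspan k lam n) :
    pia k lam (wpoly k lam t ^ m) * x ∈ Vspan k lam (n + m) := by
  induction m with
  | zero => simpa using hx
  | succ m ih =>
    have : pia k lam (wpoly k lam t ^ (m+1)) * x
        = pia k lam (wpoly k lam t) * (pia k lam (wpoly k lam t ^ m) * x) := by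
      rw [← mul_assoc, ← map_mul, ← pow_succ']
    rw [this, show n + (m+1) = (n + m) + 1 by ring]
    exact mul_w_mem k lam t ih

lemma one_mem_V0 : (1 : Sring k lam) ∈ Vspan k lam 0 := by
  have : (1 : Sring k lam) = Efam k lam 0 0 := by
    rw [Efam, monE]
    simp
  rw [this]
  exact Submodule.subset_span ⟨0, rfl⟩

lemma prod_w_mem (b : Fin 4 → ℕ) :
    pia k lam (wpoly k lam 0 ^ b 0 * wpoly k lam 1 ^ b 1 * wpoly k lam 2 ^ b 2
      * wpoly k lam 3 ^ b 3) ∈ Vspan k lam (b 0 + b 1 + b 2 + b 3) := by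
  have he : pia k lam (wpoly k lam 0 ^ b 0 * wpoly k lam 1 ^ b 1 * wpoly k lam 2 ^ b 2
        * wpoly k lam 3 ^ b 3)
      = pia k lam (wpoly k lam 0 ^ b 0) * (pia k lam (wpoly k lam 1 ^ b 1)
        * (pia k lam (wpoly k lam 2 ^ b 2) * (pia k lam (wpoly k lam 3 ^ b 3) * 1))) := by
    simp only [map_mul]
    ring
  rw [he, show b 0 + b 1 + b 2 + b 3 = ((0 + b 3 + b 2) + b 1) + b 0 by ring]
  exact mul_wpow_mem k lam 0 _ (mul_wpow_mem k lam 1 _ (mul_wpow_mem k lam 2 _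
    (mul_wpow_mem k lam 3 _ (one_mem_V0 k lam))))

lemma monomial_even (a : Fin 4 →₀ ℕ) (b : Fin 4 → ℕ) (hb : ∀ t, a t = 2 * b t) :
    pia k lam (monomial a 1)
      = pia k lam (wpoly k lam 0 ^ b 0 * wpoly k lam 1 ^ b 1 * wpoly k lam 2 ^ b 2
          * wpoly k lam 3 ^ b 3) := by
  have h1 : (monomial a 1 : MvPolynomial (Fin 4) k) = ∏ t : Fin 4, X t ^ a t := by
    rw [monomial_eq, C_1, one_mul]
    exact Finsupp.prod_fintype _ _ (fun t => pow_zero _)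
  have h2 : ∀ t : Fin 4, pia k lam (X t ^ a t) = pia k lam (wpoly k lam t ^ b t) := by
    intro t
    rw [hb t, pow_mul, map_pow (pia k lam) (X t ^ 2), pia_sq, ← map_pow]
  rw [h1, map_prod, Fin.prod_univ_four, h2 0, h2 1, h2 2, h2 3, ← map_mul, ← map_mul, ← map_mul]

lemma two_xL (t : Fin 4) : (2:ℤ) • xL t = cL := by
  rw [cL, xL, xL]
  have h1 : ∀ s : Fin 4, (2:ℤ) • (QuotientAddGroup.mk (Pi.single s (1:ℤ)) : Lgrp)
      = QuotientAddGroup.mk ((2:ℤ) • (Pi.single s (1:ℤ) : Fin 4 → ℤ)) := by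
    intro s
    exact (map_zsmul (QuotientAddGroup.mk' Lrel) _ _).symm
  rw [h1, h1]
  apply mk_eq_mk
  have : (-((2:ℤ) • (Pi.single t (1:ℤ) : Fin 4 → ℤ)))
      + (2:ℤ) • (Pi.single (0 : Fin 4) (1:ℤ) : Fin 4 → ℤ) = rl t := by
    rw [rl]; abel
  rw [this]
  exact rl_mem t

lemma xx_eq_c (t : Fin 4) : xL t + xL t = cL := by
  rw [← two_xL t, two_zsmul]

lemma lc_sub_x (l : ℕ) (hl : 1 ≤ l) (t : Fin 4) :
    l • cL - xL t = (l-1) • cL + xL t := by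
  rw [sub_eq_iff_eq_add]
  rw [add_assoc, xx_eq_c]
  rw [← succ_nsmul]
  congr 1
  omega

lemma monE_eq_monomial (k : Type*) [Field k] (p q : ℕ) :
    monE k p q = monomial (Finsupp.single 0 (2*p) + Finsupp.single 1 (2*q)) (1:k) := by
  rw [monE, X_pow_eq_monomial, X_pow_eq_monomial, monomial_mul, one_mul]

lemma mdeg_evenmon (p q l : ℕ) (hpq : p + q = l) :
    mdeg (Finsupp.single (0 : Fin 4) (2*p) + Finsupp.single 1 (2*q)) = l • cL := by
  rw [mdeg_eq_lc_iff]
  refine ⟨![p, q, 0, 0], fun t => ?_, by simp [Fin.isValue]; omega⟩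
  fin_cases t <;>
    simp [Finsupp.single_apply, Fin.isValue, finmk0, finmk1, finmk2, finmk3]

lemma Sx_lc (k : Type*) [Field k] (lam : k) (l : ℕ) :
    Sx k lam (l • cL) = Vspan k lam l := by
  apply le_antisymm
  · rw [Sx]
    apply Submodule.span_le.2
    rintro m ⟨P, ⟨a, ha, rfl⟩, rfl⟩
    obtain ⟨b, hb, hsum⟩ := (mdeg_eq_lc_iff a l).1 ha
    rw [← pia_apply, monomial_even k lam a b hb]
    rw [← hsum]
    exact prod_w_mem k lam b
  · rw [Vspan]
    apply Submodule.span_le.2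
    rintro m ⟨p, rfl⟩
    have hple : (p : ℕ) ≤ l := Nat.lt_succ_iff.1 p.isLt
    apply Submodule.subset_span
    refine ⟨monomial (Finsupp.single 0 (2*(p:ℕ)) + Finsupp.single 1 (2*(l-(p:ℕ)))) (1:k),
      ⟨_, mdeg_evenmon p (l - p) l (by omega), rfl⟩, ?_⟩
    rw [Efam, pia_apply, monE_eq_monomial]

lemma Sx_lcsub (k : Type*) [Field k] (lam : k) (l : ℕ) (hl : 1 ≤ l) (i : Fin 4) :
    Sx k lam (l • cL - xL i)
      = Submodule.map (LinearMap.mulLeft k (xg k lam i)) (Vspan k lam (l-1)) := by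
  apply le_antisymm
  · rw [Sx]
    apply Submodule.span_le.2
    rintro m ⟨P, ⟨a, ha, rfl⟩, rfl⟩
    have h2 : mdeg (a + Finsupp.single i 1) = l • cL := by
      rw [mdeg_add, mdeg_single, ha, sub_add_cancel]
    obtain ⟨b, hb, hsum⟩ := (mdeg_eq_lc_iff _ l).1 h2
    have hai : a i + 1 = 2 * b i := by
      have := hb i
      simpa [Finsupp.add_apply, Finsupp.single_eq_same] using this
    have hbi : 1 ≤ b i := by omega
    have hai1 : 1 ≤ a i := by omega
    have hat : ∀ t, t ≠ i → a t = 2 * b t := by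
      intro t ht
      have := hb t
      simpa [Finsupp.add_apply, Finsupp.single_apply, (Ne.symm ht)] using this
    have key : Finsupp.single i 1 + (a - Finsupp.single i 1) = a := by
      ext t
      by_cases h : t = i
      · subst h
        simp [Finsupp.add_apply, Finsupp.tsub_apply, Finsupp.single_eq_same]
        omega
      · simp [Finsupp.add_apply, Finsupp.tsub_apply, Finsupp.single_apply, Ne.symm h]
    have hmon : (monomial a (1:k) : MvPolynomial (Fin 4) k)
        = X i * monomial (a - Finsupp.single i 1) 1 := by
      rw [X, monomial_mul, one_mul, key]
    have ha'b' : ∀ t, (a - Finsupp.single i 1 : Fin 4 →₀ ℕ) t = 2 * (if t = i then b t - 1 else b t) := by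
      intro t
      by_cases h : t = i
      · subst h
        simp [Finsupp.tsub_apply, Finsupp.single_eq_same]
        omega
      · simp [Finsupp.tsub_apply, Finsupp.single_apply, Ne.symm h, h]
        exact hat t h
    have hmem : pia k lam (monomial (a - Finsupp.single i 1) 1) ∈ Vspan k lam (l-1) := by
      rw [monomial_even k lam _ _ ha'b']
      have hs' : (if (0:Fin 4) = i then b 0 - 1 else b 0) + (if (1:Fin 4) = i then b 1 - 1 else b 1)
          + (if (2:Fin 4) = i then b 2 - 1 else b 2) + (if (3:Fin 4) = i then b 3 - 1 else b 3)
          = l - 1 := by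
        fin_cases i <;>
          simp only [Fin.isValue, finmk0, finmk1, finmk2, finmk3] at hsum hbi ⊢ <;>
          simp <;> omega
      have := prod_w_mem k lam (fun t => if t = i then b t - 1 else b t)
      simpa [hs'] using this
    rw [← pia_apply, hmon, map_mul]
    exact Submodule.mem_map.2 ⟨_, hmem, rfl⟩
  · rw [Vspan, Submodule.map_span]
    apply Submodule.span_le.2
    rintro m ⟨_, ⟨p, rfl⟩, rfl⟩
    have hple : (p : ℕ) ≤ l - 1 := Nat.lt_succ_iff.1 p.isLt
    have hdeg : mdeg (Finsupp.single i 1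
        + (Finsupp.single 0 (2*(p:ℕ)) + Finsupp.single 1 (2*(l-1-(p:ℕ)))))
        = l • cL - xL i := by
      rw [mdeg_add, mdeg_single, mdeg_evenmon _ _ (l-1) (by omega), lc_sub_x l hl i, add_comm]
    apply Submodule.subset_span
    refine ⟨monomial (Finsupp.single i 1
        + (Finsupp.single 0 (2*(p:ℕ)) + Finsupp.single 1 (2*(l-1-(p:ℕ))))) 1,
      ⟨_, hdeg, rfl⟩, ?_⟩
    rw [LinearMap.mulLeft_apply]
    show Ideal.Quotient.mk _ _ = xg k lam i * Efam k lam (l-1) p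
    rw [Efam, ← pia_apply, monE_eq_monomial]
    show pia k lam _ = pia k lam (X i) * pia k lam _
    rw [← map_mul, X, monomial_mul, one_mul]

lemma W_eq (l : ℕ) (hl : 1 ≤ l) (i : Fin 4) :
    Submodule.map (LinearMap.mulLeft k (xg k lam i)) (Sx k lam (l • cL - xL i))
      = Submodule.span k (Set.range
          (fun p : Fin (l-1+1) => pia k lam (wpoly k lam i * monE k (p:ℕ) (l-1-(p:ℕ))))) := by
  rw [Sx_lcsub k lam l hl i, ← Submodule.map_comp, ← LinearMap.mulLeft_mul, Vspan,
    Submodule.map_span, ← Set.range_comp]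
  have hfun : (⇑(LinearMap.mulLeft k (xg k lam i * xg k lam i)) ∘ Efam k lam (l-1))
      = fun p : Fin (l-1+1) => pia k lam (wpoly k lam i * monE k (p:ℕ) (l-1-(p:ℕ))) := by
    funext p
    show LinearMap.mulLeft k (xg k lam i * xg k lam i) (Efam k lam (l-1) p) = _
    rw [LinearMap.mulLeft_apply, Efam]
    show pia k lam (X i) * pia k lam (X i) * pia k lam (monE k (p:ℕ) (l-1-(p:ℕ))) = _
    rw [← map_mul, ← map_mul, ← pow_two (X i : MvPolynomial (Fin 4) k)]
    rw [map_mul (pia k lam) (X i ^ 2), pia_sq, ← map_mul]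
  rw [hfun]

noncomputable abbrev R2 (k : Type*) [Field k] := MvPolynomial (Fin 2) k
noncomputable abbrev FF (k : Type*) [Field k] := FractionRing (R2 k)
noncomputable abbrev KK (k : Type*) [Field k] := AlgebraicClosure (FF k)

noncomputable def iota (k : Type*) [Field k] : R2 k →ₐ[k] KK k :=
  (IsScalarTower.toAlgHom k (FF k) (KK k)).comp (IsScalarTower.toAlgHom k (R2 k) (FF k))

lemma iota_inj (k : Type*) [Field k] : Function.Injective (iota k) := by
  have h1 : Function.Injective (algebraMap (FF k) (KK k)) := RingHom.injective _
  have h2 : Function.Injective (algebraMap (R2 k) (FF k)) := IsFractionRing.injective _ _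
  exact h1.comp h2

noncomputable def sqK (k : Type*) [Field k] (x : KK k) : KK k :=
  (IsAlgClosed.exists_pow_nat_eq x (n := 2) (by norm_num)).choose

lemma sqK_sq (k : Type*) [Field k] (x : KK k) : sqK k x ^ 2 = x :=
  (IsAlgClosed.exists_pow_nat_eq x (n := 2) (by norm_num)).choose_spec

noncomputable def w2 (t : Fin 4) : R2 k :=
  C (Acoef k lam t) * X 0 ^ 2 + C (Bcoef k t) * X 1 ^ 2

noncomputable def vK : Fin 4 → KK k :=
  ![iota k (X 0), iota k (X 1), sqK k (iota k (w2 k lam 2)), sqK k (iota k (w2 k lam 3))]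

noncomputable def phiK : MvPolynomial (Fin 4) k →ₐ[k] KK k := aeval (vK k lam)

lemma phiK_ker : ∀ a ∈ relIdeal k lam, phiK k lam a = 0 := by
  have hle : relIdeal k lam ≤ RingHom.ker (phiK k lam : MvPolynomial (Fin 4) k →+* KK k) := by
    rw [relIdeal, Ideal.span_le]
    rintro x (rfl | rfl)
    · rw [SetLike.mem_coe, RingHom.mem_ker]
      show phiK k lam _ = 0
      rw [map_sub, map_sub, map_pow, map_pow, map_pow, phiK, aeval_X, aeval_X, aeval_X]
      show sqK k (iota k (w2 k lam 2)) ^ 2 - iota k (X 1) ^ 2 - iota k (X 0) ^ 2 = 0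
      rw [sqK_sq, w2, Acoef, Bcoef]
      simp [map_add, map_mul, map_pow]
    · rw [SetLike.mem_coe, RingHom.mem_ker]
      show phiK k lam _ = 0
      rw [map_sub, map_sub, map_mul, map_pow, map_pow, map_pow, phiK, aeval_X, aeval_X, aeval_X,
        aeval_C]
      show sqK k (iota k (w2 k lam 3)) ^ 2 - iota k (X 1) ^ 2
          - algebraMap k (KK k) lam * iota k (X 0) ^ 2 = 0
      rw [sqK_sq, w2, Acoef, Bcoef]
      simp [map_add, map_mul, map_pow, Algebra.smul_def]
  exact fun a ha => hle ha

noncomputable def psiK : Sring k lam →ₐ[k] KK k :=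
  Ideal.Quotient.liftₐ (relIdeal k lam) (phiK k lam) (phiK_ker k lam)

lemma psiK_pia (f : MvPolynomial (Fin 4) k) : psiK k lam (pia k lam f) = phiK k lam f :=
  AlgHom.congr_fun (Ideal.Quotient.liftₐ_comp (relIdeal k lam) (phiK k lam) (phiK_ker k lam)) f

noncomputable def monE2 (p q : ℕ) : R2 k := X 0 ^ (2*p) * X 1 ^ (2*q)

lemma phiK_monE (p q : ℕ) : phiK k lam (monE k p q) = iota k (monE2 k p q) := by
  rw [monE, monE2, phiK, map_mul, map_pow, map_pow, aeval_X, aeval_X, map_mul, map_pow, map_pow]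
  rfl

lemma phiK_X01 : phiK k lam (X 0) = iota k (X 0) ∧ phiK k lam (X 1) = iota k (X 1) := by
  constructor <;> (rw [phiK, aeval_X]; rfl)

lemma phiK_wmonE (t : Fin 4) (p q : ℕ) :
    phiK k lam (wpoly k lam t * monE k p q) = iota k (w2 k lam t * monE2 k p q) := by
  rw [map_mul, map_mul, phiK_monE, wpoly, w2]
  congr 1
  simp only [map_add, map_mul, map_pow, phiK, aeval_X, aeval_C, AlgHom.commutes]
  simp [vK]

noncomputable def dexp (l : ℕ) (p : Fin (l+1)) : Fin 2 →₀ ℕ :=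
  Finsupp.single 0 (2*(p:ℕ)) + Finsupp.single 1 (2*(l-(p:ℕ)))

lemma monE2_eq (l : ℕ) (p : Fin (l+1)) :
    monE2 k (p:ℕ) (l-(p:ℕ)) = monomial (dexp l p) (1:k) := by
  rw [monE2, dexp, X_pow_eq_monomial, X_pow_eq_monomial, monomial_mul, one_mul]

lemma dexp_inj (l : ℕ) : Function.Injective (dexp l) := by
  intro p q h
  have := congrArg (fun f => f 0) h
  simp only [dexp, Finsupp.add_apply, Finsupp.single_apply] at this
  norm_num at this
  exact Fin.ext (by omega)

lemma linIndep_monE2 (l : ℕ) :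
    LinearIndependent k (fun p : Fin (l+1) => monE2 k (p:ℕ) (l-(p:ℕ))) := by
  have hb := (basisMonomials (Fin 2) k).linearIndependent
  have := hb.comp (dexp l) (dexp_inj l)
  have he : (⇑(basisMonomials (Fin 2) k) ∘ dexp l)
      = fun p : Fin (l+1) => monE2 k (p:ℕ) (l-(p:ℕ)) := by
    funext p
    rw [Function.comp_apply, coe_basisMonomials, monE2_eq]
  rwa [he] at this

lemma linIndep_E (l : ℕ) : LinearIndependent k (Efam k lam l) := by
  apply LinearIndependent.of_comp ((psiK k lam).toLinearMap)
  have he : (⇑((psiK k lam).toLinearMap) ∘ Efam k lam l)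
      = ⇑((iota k).toLinearMap) ∘ (fun p : Fin (l+1) => monE2 k (p:ℕ) (l-(p:ℕ))) := by
    funext p
    show psiK k lam (pia k lam (monE k (p:ℕ) (l-(p:ℕ)))) = iota k _
    rw [psiK_pia, phiK_monE]
  rw [he]
  exact (linIndep_monE2 k l).map' _ (LinearMap.ker_eq_bot.2 (iota_inj k))

lemma w2_ne (h0 : lam ≠ 0) (t : Fin 4) : w2 k lam t ≠ 0 := by
  fin_cases t <;> intro h
  · have := congrArg (coeff (Finsupp.single 0 2)) h
    simp [w2, Acoef, Bcoef, coeff_X_pow, Finsupp.single_eq_single_iff] at this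
  · have := congrArg (coeff (Finsupp.single 1 2)) h
    simp [w2, Acoef, Bcoef, coeff_X_pow, Finsupp.single_eq_single_iff] at this
  · have := congrArg (coeff (Finsupp.single 0 2)) h
    simp [w2, Acoef, Bcoef, coeff_X_pow, Finsupp.single_eq_single_iff] at this
  · have := congrArg (coeff (Finsupp.single 1 2)) h
    simp [w2, Acoef, Bcoef, coeff_X_pow, Finsupp.single_eq_single_iff] at this

lemma linIndep_g (h0 : lam ≠ 0) (l : ℕ) (i : Fin 4) :
    LinearIndependent k
      (fun p : Fin (l+1) => pia k lam (wpoly k lam i * monE k (p:ℕ) (l-(p:ℕ)))) := by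
  apply LinearIndependent.of_comp ((psiK k lam).toLinearMap)
  have he : (⇑((psiK k lam).toLinearMap)
        ∘ fun p : Fin (l+1) => pia k lam (wpoly k lam i * monE k (p:ℕ) (l-(p:ℕ))))
      = ⇑((iota k).toLinearMap) ∘ (⇑(LinearMap.mulLeft k (w2 k lam i))
        ∘ fun p : Fin (l+1) => monE2 k (p:ℕ) (l-(p:ℕ))) := by
    funext p
    show psiK k lam (pia k lam _) = iota k (w2 k lam i * monE2 k (p:ℕ) (l-(p:ℕ)))
    rw [psiK_pia, phiK_wmonE]
  rw [he]
  have h1 : LinearIndependent k (⇑(LinearMap.mulLeft k (w2 k lam i))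
      ∘ fun p : Fin (l+1) => monE2 k (p:ℕ) (l-(p:ℕ))) := by
    apply (linIndep_monE2 k l).map'
    rw [LinearMap.ker_eq_bot]
    have : Function.Injective (fun x : R2 k => w2 k lam i * x) :=
      mul_right_injective₀ (w2_ne k lam h0 i)
    exact this
  exact h1.map' _ (LinearMap.ker_eq_bot.2 (iota_inj k))

lemma xj_pow (j : Fin 4) (n : ℕ) :
    xg k lam j ^ (2*(n+1))
      = ∑ p : Fin (n+2),
          (((n+1).choose (p:ℕ) : k) * Acoef k lam j ^ (p:ℕ) * Bcoef k j ^ ((n+1)-(p:ℕ)))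
            • Efam k lam (n+1) p := by
  have h1 : xg k lam j ^ (2*(n+1)) = pia k lam (wpoly k lam j ^ (n+1)) := by
    show pia k lam (X j) ^ (2*(n+1)) = _
    rw [← map_pow, pow_mul, map_pow (pia k lam) ((X j : MvPolynomial (Fin 4) k) ^ 2), pia_sq,
      ← map_pow]
  have h2 : wpoly k lam j ^ (n+1)
      = ∑ m ∈ Finset.range (n+2),
          C ((((n+1).choose m : k)) * Acoef k lam j ^ m * Bcoef k j ^ ((n+1)-m))
            * monE k m ((n+1)-m) := by
    rw [wpoly, add_pow]
    apply Finset.sum_congr rfl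
    intro m _
    rw [mul_pow, mul_pow, ← C_pow, ← C_pow, monE, ← C_eq_coe_nat, C_mul, C_mul]
    ring
  rw [h1, h2, map_sum]
  rw [← Fin.sum_univ_eq_sum_range (fun m =>
    pia k lam (C ((((n+1).choose m : k)) * Acoef k lam j ^ m * Bcoef k j ^ ((n+1)-m))
      * monE k m ((n+1)-m))) (n+2)]
  apply Finset.sum_congr rfl
  intro p _
  rw [← smul_eq_C_mul, map_smul]
  rfl


end aux


set_option maxHeartbeats 1000000 in
/-- For `i ≠ j` and `l ≥ 1`, the component `S_{l·c}` is the internal direct sum of the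
line `k·x_j^{2l}` and the subspace `xᵢ·S_{l·c − xᵢ}`, the latter of dimension `l`;
in particular `x_j^{2l}` cannot be factored through multiplication by `xᵢ`. -/
theorem component_direct_sum_decomposition (k : Type*) [Field k] (hchar : ringChar k ≠ 2)
    (lam : k) (h0 : lam ≠ 0) (h1 : lam ≠ 1)
    (i j : Fin 4) (hij : i ≠ j) (l : ℕ) (hl : 1 ≤ l) :
    (Submodule.span k {xg k lam j ^ (2 * l)} ⊔
      Submodule.map (LinearMap.mulLeft k (xg k lam i)) (Sx k lam (l • cL - xL i)) =
        Sx k lam (l • cL)) ∧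
    (Submodule.span k {xg k lam j ^ (2 * l)} ⊓
      Submodule.map (LinearMap.mulLeft k (xg k lam i)) (Sx k lam (l • cL - xL i)) = ⊥) ∧
    Module.finrank k
      (Submodule.map (LinearMap.mulLeft k (xg k lam i)) (Sx k lam (l • cL - xL i))) = l ∧
    xg k lam j ^ (2 * l) ∉
      Submodule.map (LinearMap.mulLeft k (xg k lam i)) (Sx k lam (l • cL - xL i)) := by
  obtain ⟨n, rfl⟩ : ∃ n, l = n + 1 := ⟨l - 1, by omega⟩
  clear hl
  -- determinant
  have hD : Acoef k lam i * Bcoef k j - Bcoef k i * Acoef k lam j ≠ 0 := by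
    fin_cases i <;> fin_cases j <;>
      simp_all [Acoef, Bcoef, sub_eq_zero] <;>
      exact fun h => h1 h.symm
  -- the subspace W
  have hW : Submodule.map (LinearMap.mulLeft k (xg k lam i)) (Sx k lam ((n+1) • cL - xL i))
      = Submodule.span k (Set.range
          (fun p : Fin (n+1) => pia k lam (wpoly k lam i * monE k (p:ℕ) (n-(p:ℕ))))) :=
    W_eq k lam (n+1) (by omega) i
  have hB : Sx k lam ((n+1) • cL) = Vspan k lam (n+1) := Sx_lc k lam (n+1)
  rw [hW, hB]
  -- linear independence
  have hE := linIndep_E k lam (n+1)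
  have hg := linIndep_g k lam h0 n i
  -- the functional
  obtain ⟨Φ, hΦ⟩ := LinearMap.exists_extend ((Module.Basis.span hE).constr k
    (fun p : Fin (n+2) => (-(Bcoef k i))^(p:ℕ) * Acoef k lam i ^ ((n+1)-(p:ℕ))))
  have hΦE : ∀ p : Fin (n+2), Φ (Efam k lam (n+1) p)
      = (-(Bcoef k i))^(p:ℕ) * Acoef k lam i ^ ((n+1)-(p:ℕ)) := by
    intro p
    have h2 := LinearMap.congr_fun hΦ ((Module.Basis.span hE) p)
    rw [Module.Basis.constr_basis] at h2
    have h1 : (Submodule.span k (Set.range (Efam k lam (n+1)))).subtype ((Module.Basis.span hE) p)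
        = Efam k lam (n+1) p := congrArg Subtype.val (Module.Basis.span_apply hE p)
    rw [LinearMap.comp_apply, h1] at h2
    exact h2
  have hΦg : ∀ p : Fin (n+1), Φ (pia k lam (wpoly k lam i * monE k (p:ℕ) (n-(p:ℕ)))) = 0 := by
    intro p
    have hple : (p:ℕ) ≤ n := Nat.lt_succ_iff.1 p.isLt
    have hgE : pia k lam (wpoly k lam i * monE k (p:ℕ) (n-(p:ℕ)))
        = Acoef k lam i • Efam k lam (n+1) p.succ + Bcoef k i • Efam k lam (n+1) p.castSucc := by
      rw [map_mul]
      exact wE k lam i n p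
    rw [hgE, map_add, map_smul, map_smul, hΦE, hΦE, Fin.val_succ, Fin.coe_castSucc]
    rw [show (n+1) - ((p:ℕ)+1) = n - (p:ℕ) from by omega,
      show (n+1) - (p:ℕ) = (n - (p:ℕ)) + 1 from by omega]
    simp only [smul_eq_mul]
    ring
  have hWker : Submodule.span k (Set.range
      (fun p : Fin (n+1) => pia k lam (wpoly k lam i * monE k (p:ℕ) (n-(p:ℕ)))))
      ≤ LinearMap.ker Φ := by
    rw [Submodule.span_le]
    rintro x ⟨p, rfl⟩
    exact LinearMap.mem_ker.2 (hΦg p)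
  -- value on z
  have hz := xj_pow k lam j n
  have hΦz : Φ (xg k lam j ^ (2*(n+1)))
      = (Acoef k lam i * Bcoef k j - Bcoef k i * Acoef k lam j)^(n+1) := by
    rw [hz, map_sum]
    have : ∀ p : Fin (n+2),
        Φ ((((n+1).choose (p:ℕ) : k) * Acoef k lam j ^ (p:ℕ) * Bcoef k j ^ ((n+1)-(p:ℕ)))
          • Efam k lam (n+1) p)
        = (Acoef k lam j * (-(Bcoef k i)))^(p:ℕ)
            * (Bcoef k j * Acoef k lam i)^((n+1)-(p:ℕ)) * ((n+1).choose (p:ℕ) : k) := by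
      intro p
      rw [map_smul, hΦE, smul_eq_mul, mul_pow, mul_pow]
      ring
    rw [Finset.sum_congr rfl (fun p _ => this p)]
    rw [Fin.sum_univ_eq_sum_range (fun m => (Acoef k lam j * (-(Bcoef k i)))^m
      * (Bcoef k j * Acoef k lam i)^((n+1)-m) * ((n+1).choose m : k)) (n+2)]
    rw [← add_pow]
    congr 1
    ring
  have hzne : xg k lam j ^ (2*(n+1)) ≠ 0 := by
    intro h
    rw [h, map_zero] at hΦz
    exact pow_ne_zero _ hD hΦz.symm
  -- conclusion 4
  have notmem : xg k lam j ^ (2*(n+1)) ∉ Submodule.span k (Set.range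
      (fun p : Fin (n+1) => pia k lam (wpoly k lam i * monE k (p:ℕ) (n-(p:ℕ))))) := by
    intro hmem
    have := LinearMap.mem_ker.1 (hWker hmem)
    rw [this] at hΦz
    exact pow_ne_zero _ hD hΦz.symm
  -- conclusion 2
  have hinf : Submodule.span k {xg k lam j ^ (2*(n+1))} ⊓ Submodule.span k (Set.range
      (fun p : Fin (n+1) => pia k lam (wpoly k lam i * monE k (p:ℕ) (n-(p:ℕ))))) = ⊥ := by
    rw [eq_bot_iff]
    rintro x ⟨hx1, hx2⟩
    obtain ⟨t, rfl⟩ := Submodule.mem_span_singleton.1 hx1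
    have h3 := LinearMap.mem_ker.1 (hWker hx2)
    rw [map_smul, smul_eq_mul, hΦz] at h3
    have ht : t = 0 := by
      rcases mul_eq_zero.1 h3 with h | h
      · exact h
      · exact absurd h (pow_ne_zero _ hD)
    rw [ht, zero_smul]
    exact Submodule.zero_mem ⊥
  -- conclusion 3
  have hfrW : Module.finrank k (Submodule.span k (Set.range
      (fun p : Fin (n+1) => pia k lam (wpoly k lam i * monE k (p:ℕ) (n-(p:ℕ)))))) = n+1 := by
    rw [finrank_span_eq_card hg, Fintype.card_fin]
  -- conclusion 1
  have hsup : Submodule.span k {xg k lam j ^ (2*(n+1))} ⊔ Submodule.span k (Set.range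
      (fun p : Fin (n+1) => pia k lam (wpoly k lam i * monE k (p:ℕ) (n-(p:ℕ)))))
      = Vspan k lam (n+1) := by
    have hle : Submodule.span k {xg k lam j ^ (2*(n+1))} ⊔ Submodule.span k (Set.range
        (fun p : Fin (n+1) => pia k lam (wpoly k lam i * monE k (p:ℕ) (n-(p:ℕ)))))
        ≤ Vspan k lam (n+1) := by
      apply sup_le
      · rw [Submodule.span_le, Set.singleton_subset_iff]
        rw [SetLike.mem_coe, hz]
        apply Submodule.sum_mem
        intro p _
        exact Submodule.smul_mem _ _ (Submodule.subset_span ⟨p, rfl⟩)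
      · rw [Submodule.span_le]
        rintro x ⟨p, rfl⟩
        have hple : (p:ℕ) ≤ n := Nat.lt_succ_iff.1 p.isLt
        have hgE : pia k lam (wpoly k lam i * monE k (p:ℕ) (n-(p:ℕ)))
            = Acoef k lam i • Efam k lam (n+1) p.succ
              + Bcoef k i • Efam k lam (n+1) p.castSucc := by
          rw [map_mul]
          exact wE k lam i n p
        rw [SetLike.mem_coe]
        show pia k lam (wpoly k lam i * monE k (p:ℕ) (n-(p:ℕ))) ∈ Vspan k lam (n+1)
        rw [hgE]
        exact Submodule.add_mem _
          (Submodule.smul_mem _ _ (Submodule.subset_span ⟨p.succ, rfl⟩))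
          (Submodule.smul_mem _ _ (Submodule.subset_span ⟨p.castSucc, rfl⟩))
    haveI hfdB : FiniteDimensional k (Vspan k lam (n+1)) :=
      FiniteDimensional.span_of_finite k (Set.finite_range _)
    haveI hfdW : FiniteDimensional k (Submodule.span k (Set.range
        (fun p : Fin (n+1) => pia k lam (wpoly k lam i * monE k (p:ℕ) (n-(p:ℕ)))))) :=
      FiniteDimensional.span_of_finite k (Set.finite_range _)
    apply Submodule.eq_of_le_of_finrank_le hle
    have hfrB : Module.finrank k (Vspan k lam (n+1)) = n+2 := by
      rw [Vspan, finrank_span_eq_card hE, Fintype.card_fin]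
    have hfr1 : Module.finrank k (Submodule.span k {xg k lam j ^ (2*(n+1))}) = 1 := by
      rw [show ({xg k lam j ^ (2*(n+1))} : Set (Sring k lam))
        = {x | x = xg k lam j ^ (2*(n+1))} from rfl]
      exact finrank_span_singleton hzne
    have := Submodule.finrank_sup_add_finrank_inf_eq
      (Submodule.span k {xg k lam j ^ (2*(n+1))})
      (Submodule.span k (Set.range
        (fun p : Fin (n+1) => pia k lam (wpoly k lam i * monE k (p:ℕ) (n-(p:ℕ))))))
    rw [hinf, hfr1, hfrW] at this
    simp only [finrank_bot] at this
    rw [hfrB]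
    omega
  exact ⟨hsup, hinf, hfrW, notmem⟩
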